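/- Let (K, ρ, μ) be a compact metric measure space such that μ(B_r(x)) ≥ C r^Q for some constants C > 0, Q ≥ 0 and all x ∈ K, r > 0, and let p > Q/s with s ∈ (0,1). If u ∈ L^p(K, μ) and g ∈ L^p(K, μ) is a Hajłasz s-gradient of u (i.e., |u(x)-u(y)| ≤ ρ(x,y)^s (g(x)+g(y)) for μ-a.e. x, y), then u has a representative satisfying |u(x)-u(y)| ≤ C' ρ(x,y)^{s - Q/p} ‖g‖_{L^p} for all x, y ∈ K, where C' depends only on C, Q, p, s. -/

import Mathlib

set_option maxHeartbeats 1000000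


open Metric MeasureTheory NNReal ENNReal

private lemma div_le_div_of_nonneg_right' {a b c : ℝ} (hc : 0 < c) (h : a ≤ b) :
    a / c ≤ b / c := by
  rw [div_le_div_iff₀ hc hc]
  nlinarith


/-- Morrey-type estimate: on a metric measure space with lower mass bound
`μ(B_r(x)) ≥ C r^Q` and `p > Q/s`, any `u ∈ L^p` with Hajłasz `s`-gradient
`g ∈ L^p` has a representative which is `(s - Q/p)`-Hölder with constant
`C' ‖g‖_{L^p}`, where `C'` depends only on `C, Q, p, s`. -/
theorem hajlasz_morrey {K : Type*} [MetricSpace K] [CompactSpace K]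
    [MeasurableSpace K] [BorelSpace K] (μ : Measure K)
    (C Q s p : ℝ) (hC : 0 < C) (hQ : 0 ≤ Q) (hs : 0 < s) (hs1 : s < 1)
    (hp1 : 1 ≤ p) (hp : Q / s < p)
    (hlow : ∀ (x : K) (r : ℝ), 0 < r → ENNReal.ofReal (C * r ^ Q) ≤ μ (ball x r)) :
    ∃ C' > (0 : ℝ), ∀ u g : K → ℝ,
      MemLp u (ENNReal.ofReal p) μ →
      MemLp g (ENNReal.ofReal p) μ →
      (∀ x, 0 ≤ g x) →
      (∀ᵐ x ∂μ, ∀ᵐ y ∂μ, |u x - u y| ≤ dist x y ^ s * (g x + g y)) →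
      ∃ v : K → ℝ, u =ᵐ[μ] v ∧ ∀ x y : K,
        |v x - v y| ≤ C' * dist x y ^ (s - Q / p) *
          (eLpNorm g (ENNReal.ofReal p) μ).toReal := by
  have hp0 : (0:ℝ) < p := lt_of_lt_of_le one_pos hp1
  have hQp : 0 ≤ Q / p := div_nonneg hQ hp0.le
  have ht : 0 < s - Q / p := by
    have h1 : Q < p * s := (div_lt_iff₀ hs).mp hp
    have : Q / p < s := (div_lt_iff₀ hp0).mpr (by linarith)
    linarith
  set t := s - Q / p with ht_def
  -- basic constants
  set K0 : ℝ := (2 / C) ^ (1 / p) with hK0_def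
  have hK0 : 0 < K0 := Real.rpow_pos_of_pos (by positivity) _
  set q : ℝ := (1 / 2 : ℝ) ^ t with hq_def
  have hq0 : 0 < q := Real.rpow_pos_of_pos (by norm_num) _
  have hq1 : q < 1 := Real.rpow_lt_one (by norm_num) (by norm_num) ht
  have h1q : 0 < 1 - q := by linarith
  have h2Qp : (1:ℝ) ≤ 2 ^ (Q / p) := by
    simpa using Real.rpow_le_rpow_of_exponent_le (by norm_num : (1:ℝ) ≤ 2) hQp
  set Cs : ℝ := 2 ^ s * 4 * 2 ^ (Q / p) * K0 with hCs_def
  have hCs : 0 < Cs := by positivity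
  set M : ℝ := 2 * Metric.diam (Set.univ : Set K) + 2 with hM_def
  have hM2 : 2 ≤ M := by
    have := Metric.diam_nonneg (s := (Set.univ : Set K))
    linarith
  have hM0 : 0 < M := by linarith
  set Cm : ℝ := 4 * 3 ^ s * K0 * M ^ (Q / p) with hCm_def
  have hCm : 0 < Cm := by positivity
  -- auxiliary rpow facts
  have hpow : ∀ (e : ℝ) (i : ℕ), ((1/2:ℝ)^i) ^ e = ((1/2:ℝ)^e)^i := by
    intro e i
    rw [← Real.rpow_natCast (1/2:ℝ) i, ← Real.rpow_mul (by norm_num : (0:ℝ) ≤ 1/2),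
      mul_comm (i:ℝ) e, Real.rpow_mul (by norm_num : (0:ℝ) ≤ 1/2), Real.rpow_natCast]
  refine ⟨2 * Cs / (1 - q) + Cm + 1, ?_, ?_⟩
  · have h1 : 0 ≤ 2 * Cs / (1 - q) := div_nonneg (by positivity) h1q.le
    linarith
  intro u g hu hg hg0 hH
  set N : ℝ := (eLpNorm g (ENNReal.ofReal p) μ).toReal with hN_def
  have hN0 : 0 ≤ N := ENNReal.toReal_nonneg
  set lam : ℝ → ℝ := fun r => K0 * r ^ (-(Q / p)) * N with hlam_def
  have hlam0 : ∀ r : ℝ, 0 < r → 0 ≤ lam r := by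
    intro r hr
    have : 0 < r ^ (-(Q / p)) := Real.rpow_pos_of_pos hr _
    simp only [hlam_def]
    positivity
  have hP0 : (ENNReal.ofReal p) ≠ 0 := by
    simp only [ne_eq, ENNReal.ofReal_eq_zero, not_le]; exact hp0
  have hPtop : (ENNReal.ofReal p) ≠ ⊤ := ENNReal.ofReal_ne_top
  have hPt : (ENNReal.ofReal p).toReal = p := ENNReal.toReal_ofReal hp0.le
  -- Chebyshev estimate
  have cheb : ∀ r : ℝ, 0 < r → μ {z | lam r < g z} < ENNReal.ofReal (C * r ^ Q) := by
    intro r hr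
    have hrQ : (0:ℝ) < r ^ Q := Real.rpow_pos_of_pos hr _
    have hCr : 0 < C * r ^ Q := by positivity
    by_cases hNz : eLpNorm g (ENNReal.ofReal p) μ = 0
    · have hgz : ∀ᵐ z ∂μ, g z = 0 := by
        have := (eLpNorm_eq_zero_iff hg.aestronglyMeasurable hP0).mp hNz
        filter_upwards [this] with z hz using hz
      have hmz : μ {z | lam r < g z} = 0 := by
        refine measure_mono_null ?_ (ae_iff.mp hgz)
        intro z hz
        simp only [Set.mem_setOf_eq] at *
        intro h0
        rw [h0] at hz
        exact absurd hz (not_lt.mpr (hlam0 r hr))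
      rw [hmz]
      exact ENNReal.ofReal_pos.mpr hCr
    · have hNtop : eLpNorm g (ENNReal.ofReal p) μ ≠ ⊤ := hg.2.ne
      have hNpos : 0 < N := ENNReal.toReal_pos hNz hNtop
      have hlamr : 0 < lam r := by
        simp only [hlam_def]
        have : 0 < r ^ (-(Q / p)) := Real.rpow_pos_of_pos hr _
        positivity
      have hε : (ENNReal.ofReal (lam r)) ≠ 0 := by
        simp only [ne_eq, ENNReal.ofReal_eq_zero, not_le]; exact hlamr
      have hch := meas_ge_le_mul_pow_eLpNorm_enorm (μ := μ) hP0 hPtop hg.aestronglyMeasurable hε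
        (fun h => absurd h ENNReal.ofReal_ne_top)
      have hsub : {z | lam r < g z} ⊆ {z | ENNReal.ofReal (lam r) ≤ (‖g z‖₊ : ℝ≥0∞)} := by
        intro z hz
        simp only [Set.mem_setOf_eq] at *
        calc ENNReal.ofReal (lam r) ≤ ENNReal.ofReal (g z) := ENNReal.ofReal_le_ofReal hz.le
        _ = (‖g z‖₊ : ℝ≥0∞) := by
            show _ = ‖g z‖ₑ
            rw [← ofReal_norm, Real.norm_of_nonneg (hg0 z)]
      refine lt_of_le_of_lt ((measure_mono hsub).trans hch) ?_
      rw [hPt]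
      have hNg : eLpNorm g (ENNReal.ofReal p) μ = ENNReal.ofReal N := by
        rw [hN_def, ENNReal.ofReal_toReal hNtop]
      rw [hNg, ← ENNReal.ofReal_inv_of_pos hlamr,
        ENNReal.ofReal_rpow_of_pos (by positivity),
        ENNReal.ofReal_rpow_of_pos hNpos,
        ← ENNReal.ofReal_mul (by positivity)]
      refine (ENNReal.ofReal_lt_ofReal_iff hCr).mpr ?_
      have hcalc : (lam r)⁻¹ ^ p * N ^ p = C / 2 * r ^ Q := by
        have e1 : (lam r) ^ p = (2 / C) * (r ^ Q)⁻¹ * N ^ p := by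
          simp only [hlam_def]
          rw [Real.mul_rpow (by positivity) hN0,
            Real.mul_rpow hK0.le (Real.rpow_nonneg hr.le _)]
          congr 2
          · rw [hK0_def, ← Real.rpow_mul (by positivity : (0:ℝ) ≤ 2 / C),
              one_div_mul_cancel hp0.ne', Real.rpow_one]
          · rw [← Real.rpow_mul hr.le, neg_mul, div_mul_cancel₀ Q hp0.ne',
              Real.rpow_neg hr.le]
        rw [Real.inv_rpow (hlam0 r hr), e1]
        have hNp : (0:ℝ) < N ^ p := Real.rpow_pos_of_pos hNpos _
        field_simp
      rw [hcalc]
      nlinarith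
  -- selection of good points
  have key : ∀ (x : K) (r : ℝ), 0 < r → ∀ (P : K → Prop), (∀ᵐ y ∂μ, P y) →
      ∃ z, dist z x < r ∧ g z ≤ lam r ∧ P z := by
    intro x r hr P hP
    have hS : μ (ball x r ∩ {z | g z ≤ lam r}) ≠ 0 := by
      intro h0
      have hsub : ball x r ⊆ (ball x r ∩ {z | g z ≤ lam r}) ∪ {z | lam r < g z} := by
        intro z hz
        by_cases h : g z ≤ lam r
        · exact Or.inl ⟨hz, h⟩
        · exact Or.inr (not_le.mp h)
      have h1 := (hlow x r hr).trans ((measure_mono hsub).trans (measure_union_le _ _))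
      rw [h0, zero_add] at h1
      exact absurd h1 (not_le.mpr (cheb r hr))
    by_contra hcon
    push_neg at hcon
    have hsub2 : ball x r ∩ {z | g z ≤ lam r} ⊆ {z | ¬ P z} := by
      intro z hz
      exact hcon z (mem_ball.mp hz.1) hz.2
    exact hS (measure_mono_null hsub2 (ae_iff.mp hP))
  -- the chain of good points
  have hex : ∀ (x : K) (i : ℕ), ∃ z, dist z x < (1/2:ℝ)^i ∧ g z ≤ lam ((1/2:ℝ)^i) ∧
      (∀ᵐ y ∂μ, |u z - u y| ≤ dist z y ^ s * (g z + g y)) := by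
    intro x i
    exact key x _ (by positivity) _ hH
  choose pk hd hgp hmem using hex
  -- rpow computations at dyadic scales
  have hlamq : ∀ i : ℕ, ((1/2:ℝ)^i) ^ s * lam ((1/2:ℝ)^i) = K0 * N * q ^ i := by
    intro i
    have hbi : (0:ℝ) < (1/2:ℝ)^i := by positivity
    simp only [hlam_def]
    rw [show ((1/2:ℝ)^i) ^ s * (K0 * ((1/2:ℝ)^i) ^ (-(Q/p)) * N)
        = K0 * N * (((1/2:ℝ)^i) ^ s * ((1/2:ℝ)^i) ^ (-(Q/p))) from by ring,
      ← Real.rpow_add hbi, hq_def,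
      show s + -(Q/p) = t from by rw [ht_def]; ring, hpow t i]
  have hlamstep : ∀ i : ℕ, lam ((1/2:ℝ)^(i+1)) ≤ 2 ^ (Q/p) * lam ((1/2:ℝ)^i) := by
    intro i
    have h12 : ((1/2:ℝ)) ^ (-(Q/p)) = 2 ^ (Q/p) := by
      rw [Real.rpow_neg (by norm_num : (0:ℝ) ≤ 1/2), one_div,
        Real.inv_rpow (by norm_num : (0:ℝ) ≤ 2), inv_inv]
    have hsplit : ((1/2:ℝ)^(i+1)) ^ (-(Q/p)) = 2^(Q/p) * ((1/2:ℝ)^i) ^ (-(Q/p)) := by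
      rw [pow_succ, Real.mul_rpow (by positivity) (by norm_num), h12]
      ring
    simp only [hlam_def]
    rw [hsplit]
    exact le_of_eq (by ring)
  -- step estimate for the chain
  have hstep : ∀ (x : K) (i : ℕ),
      dist (u (pk x i)) (u (pk x (i+1))) ≤ Cs * N * q ^ i := by
    intro x i
    have hbi : (0:ℝ) < (1/2:ℝ)^i := by positivity
    have hbi2 : ((1/2:ℝ)^(i+1)) ≤ (1/2:ℝ)^i := by
      apply pow_le_pow_of_le_one (by norm_num) (by norm_num)
      omega
    obtain ⟨w, hw1, hw2, hw3⟩ := key x ((1/2:ℝ)^(i+1)) (by positivity)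
      (fun z => |u (pk x i) - u z| ≤ dist (pk x i) z ^ s * (g (pk x i) + g z) ∧
        |u (pk x (i+1)) - u z| ≤ dist (pk x (i+1)) z ^ s * (g (pk x (i+1)) + g z))
      ((hmem x i).and (hmem x (i+1)))
    have hdw1 : dist (pk x i) w ≤ 2 * (1/2:ℝ)^i := by
      calc dist (pk x i) w ≤ dist (pk x i) x + dist w x := dist_triangle_right _ _ _
      _ ≤ (1/2:ℝ)^i + (1/2:ℝ)^i := by
          have h1 := hd x i
          have h2 := hw1
          linarith [hbi2]
      _ = 2 * (1/2:ℝ)^i := by ring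
    have hdw2 : dist (pk x (i+1)) w ≤ 2 * (1/2:ℝ)^i := by
      calc dist (pk x (i+1)) w ≤ dist (pk x (i+1)) x + dist w x := dist_triangle_right _ _ _
      _ ≤ (1/2:ℝ)^(i+1) + (1/2:ℝ)^(i+1) := by
          have := hd x (i+1)
          have := hw1
          linarith
      _ ≤ 2 * (1/2:ℝ)^i := by linarith [hbi2]
    have hlami : 0 ≤ lam ((1/2:ℝ)^i) := hlam0 _ hbi
    have hgw : g w ≤ 2^(Q/p) * lam ((1/2:ℝ)^i) := hw2.trans (hlamstep i)
    have hgp1 : g (pk x (i+1)) ≤ 2^(Q/p) * lam ((1/2:ℝ)^i) := (hgp x (i+1)).trans (hlamstep i)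
    have hgp0 : g (pk x i) ≤ 2^(Q/p) * lam ((1/2:ℝ)^i) := by
      nlinarith [hgp x i, h2Qp, hlami]
    have hsum1 : g (pk x i) + g w ≤ 2 * (2^(Q/p) * lam ((1/2:ℝ)^i)) := by linarith
    have hsum2 : g (pk x (i+1)) + g w ≤ 2 * (2^(Q/p) * lam ((1/2:ℝ)^i)) := by linarith
    have hrpow1 : dist (pk x i) w ^ s ≤ (2 * (1/2:ℝ)^i) ^ s :=
      Real.rpow_le_rpow dist_nonneg hdw1 hs.le
    have hrpow2 : dist (pk x (i+1)) w ^ s ≤ (2 * (1/2:ℝ)^i) ^ s :=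
      Real.rpow_le_rpow dist_nonneg hdw2 hs.le
    have hnn : (0:ℝ) ≤ (2 * (1/2:ℝ)^i) ^ s := Real.rpow_nonneg (by positivity) _
    calc dist (u (pk x i)) (u (pk x (i+1))) = |u (pk x i) - u (pk x (i+1))| := Real.dist_eq _ _
    _ ≤ |u (pk x i) - u w| + |u w - u (pk x (i+1))| := abs_sub_le _ _ _
    _ = |u (pk x i) - u w| + |u (pk x (i+1)) - u w| := by rw [abs_sub_comm (u w)]
    _ ≤ dist (pk x i) w ^ s * (g (pk x i) + g w)
        + dist (pk x (i+1)) w ^ s * (g (pk x (i+1)) + g w) := add_le_add hw3.1 hw3.2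
    _ ≤ (2 * (1/2:ℝ)^i) ^ s * (2 * (2^(Q/p) * lam ((1/2:ℝ)^i)))
        + (2 * (1/2:ℝ)^i) ^ s * (2 * (2^(Q/p) * lam ((1/2:ℝ)^i))) := by
        gcongr
        · exact add_nonneg (hg0 _) (hg0 _)
        · exact add_nonneg (hg0 _) (hg0 _)
    _ = (2:ℝ)^s * 4 * 2^(Q/p) * (((1/2:ℝ)^i) ^ s * lam ((1/2:ℝ)^i)) := by
        rw [Real.mul_rpow (by norm_num) (le_of_lt hbi)]
        ring
    _ = Cs * N * q ^ i := by rw [hlamq i, hCs_def]; ring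
  -- the limit function
  have hcauchy : ∀ x : K, CauchySeq (fun i => u (pk x i)) := by
    intro x
    exact cauchySeq_of_le_geometric q (Cs * N) hq1 (fun i => by
      simpa [mul_assoc] using hstep x i)
  choose v hv using fun x => cauchySeq_tendsto_of_complete (hcauchy x)
  have htail : ∀ (x : K) (j : ℕ),
      dist (u (pk x j)) (v x) ≤ Cs * N * q ^ j / (1 - q) := by
    intro x j
    exact dist_le_of_le_geometric_of_tendsto q (Cs * N) hq1
      (fun i => by simpa [mul_assoc] using hstep x i) (hv x) j
  refine ⟨v, ?_, ?_⟩
  · -- u = v a.e.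
    filter_upwards [hH] with x hx
    refine tendsto_nhds_unique ?_ (hv x)
    rw [tendsto_iff_dist_tendsto_zero]
    have hb : ∀ i : ℕ, dist (u (pk x i)) (u x)
        ≤ ((1/2:ℝ)^s)^i * g x + ((1 + 2^s * 2 * 2^(Q/p)) * (K0 * N)) * q ^ i := by
      intro i
      have hbi : (0:ℝ) < (1/2:ℝ)^i := by positivity
      obtain ⟨w, hw1, hw2, hw3⟩ := key x ((1/2:ℝ)^i) hbi
        (fun z => |u x - u z| ≤ dist x z ^ s * (g x + g z) ∧
          |u (pk x i) - u z| ≤ dist (pk x i) z ^ s * (g (pk x i) + g z))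
        (hx.and (hmem x i))
      have hlami : 0 ≤ lam ((1/2:ℝ)^i) := hlam0 _ hbi
      have hdw0 : dist x w ≤ (1/2:ℝ)^i := by
        rw [dist_comm]; exact hw1.le
      have hdw1 : dist (pk x i) w ≤ 2 * (1/2:ℝ)^i := by
        calc dist (pk x i) w ≤ dist (pk x i) x + dist w x := dist_triangle_right _ _ _
        _ ≤ (1/2:ℝ)^i + (1/2:ℝ)^i := add_le_add (hd x i).le hw1.le
        _ = 2 * (1/2:ℝ)^i := by ring
      have h1 : |u x - u w| ≤ ((1/2:ℝ)^i) ^ s * (g x + lam ((1/2:ℝ)^i)) := by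
        refine le_trans hw3.1 ?_
        refine mul_le_mul (Real.rpow_le_rpow dist_nonneg hdw0 hs.le)
          (add_le_add le_rfl hw2) (add_nonneg (hg0 _) (hg0 _))
          (Real.rpow_nonneg hbi.le _)
      have h2 : |u (pk x i) - u w| ≤ (2 * (1/2:ℝ)^i) ^ s * (2 * lam ((1/2:ℝ)^i)) := by
        refine le_trans hw3.2 ?_
        refine mul_le_mul (Real.rpow_le_rpow dist_nonneg hdw1 hs.le)
          (by have := hgp x i; linarith) (add_nonneg (hg0 _) (hg0 _))
          (Real.rpow_nonneg (by positivity) _)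
      calc dist (u (pk x i)) (u x) = |u x - u (pk x i)| := by
            rw [dist_comm]; exact Real.dist_eq _ _
      _ ≤ |u x - u w| + |u w - u (pk x i)| := abs_sub_le _ _ _
      _ = |u x - u w| + |u (pk x i) - u w| := by rw [abs_sub_comm (u w)]
      _ ≤ ((1/2:ℝ)^i) ^ s * (g x + lam ((1/2:ℝ)^i))
          + (2 * (1/2:ℝ)^i) ^ s * (2 * lam ((1/2:ℝ)^i)) := add_le_add h1 h2
      _ = ((1/2:ℝ)^i) ^ s * g x + (1 + 2^s * 2) * (((1/2:ℝ)^i) ^ s * lam ((1/2:ℝ)^i)) := by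
          rw [Real.mul_rpow (by norm_num) hbi.le]
          ring
      _ ≤ ((1/2:ℝ)^s)^i * g x + ((1 + 2^s * 2 * 2^(Q/p)) * (K0 * N)) * q ^ i := by
          rw [hlamq i, hpow s i]
          have hqi : (0:ℝ) ≤ q ^ i := pow_nonneg hq0.le i
          have h2s : (0:ℝ) ≤ (2:ℝ)^s := Real.rpow_nonneg (by norm_num) _
          have hco : (1 + 2^s*2 : ℝ) ≤ 1 + 2^s*2*2^(Q/p) := by nlinarith [h2s, h2Qp]
          have hmono := mul_le_mul_of_nonneg_right hco
            (mul_nonneg (mul_nonneg hK0.le hN0) hqi)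
          nlinarith [hmono]
    refine squeeze_zero (fun i => dist_nonneg) hb ?_
    have t1 : Filter.Tendsto (fun i : ℕ => ((1/2:ℝ)^s)^i) Filter.atTop (nhds 0) :=
      tendsto_pow_atTop_nhds_zero_of_lt_one (Real.rpow_nonneg (by norm_num) _)
        (Real.rpow_lt_one (by norm_num) (by norm_num) hs)
    have t2 : Filter.Tendsto (fun i : ℕ => q^i) Filter.atTop (nhds 0) :=
      tendsto_pow_atTop_nhds_zero_of_lt_one hq0.le hq1
    have := (t1.mul_const (g x)).add (t2.const_mul ((1 + 2^s * 2 * 2^(Q/p)) * (K0 * N)))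
    simpa using this
  · -- the Hölder estimate
    intro x y
    by_cases hxy : x = y
    · subst hxy
      simp [Real.zero_rpow ht.ne']
    have hr : 0 < dist x y := dist_pos.mpr hxy
    set r := dist x y with hr_def
    have hex2 : ∃ n : ℕ, (1/2:ℝ)^n < r := exists_pow_lt_of_lt_one hr (by norm_num)
    set j := Nat.find hex2 with hj_def
    have hj1 : (1/2:ℝ)^j < r := Nat.find_spec hex2
    have hbj : (0:ℝ) < (1/2:ℝ)^j := by positivity
    have hrM : r ≤ M := by
      have h1 : r ≤ Metric.diam (Set.univ : Set K) :=
        Metric.dist_le_diam_of_mem (isCompact_univ.isBounded) (Set.mem_univ x) (Set.mem_univ y)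
      have := Metric.diam_nonneg (s := (Set.univ : Set K))
      rw [hM_def]; linarith
    have hj2 : r / M ≤ (1/2:ℝ)^j := by
      rcases Nat.eq_zero_or_pos j with h0 | hpos
      · rw [h0, pow_zero]
        rw [div_le_one hM0]
        exact hrM
      · have hmin : ¬ ((1/2:ℝ)^(j-1) < r) := Nat.find_min hex2 (by omega)
        push_neg at hmin
        have hhalf : (1/2:ℝ)^j = (1/2:ℝ)^(j-1) * (1/2) := by
          rw [← pow_succ]
          congr 1
          omega
        have h1 : r / 2 ≤ (1/2:ℝ)^j := by
          rw [hhalf]; linarith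
        have h2 : r / M ≤ r / 2 := div_le_div_of_nonneg_left hr.le (by norm_num) hM2
        linarith
    -- bound on lam at scale j
    have hlamj : lam ((1/2:ℝ)^j) ≤ K0 * M^(Q/p) * r^(-(Q/p)) * N := by
      have hrm0 : 0 < r / M := by positivity
      have h1 : ((1/2:ℝ)^j) ^ (-(Q/p)) ≤ (r / M) ^ (-(Q/p)) :=
        Real.rpow_le_rpow_of_nonpos hrm0 hj2 (by linarith)
      have h2 : (r / M) ^ (-(Q/p)) = r^(-(Q/p)) * M^(Q/p) := by
        rw [Real.div_rpow hr.le hM0.le, Real.rpow_neg hM0.le, div_eq_mul_inv, inv_inv]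
      simp only [hlam_def]
      calc K0 * ((1/2:ℝ)^j) ^ (-(Q/p)) * N ≤ K0 * ((r / M) ^ (-(Q/p))) * N := by
            have h4 : 0 ≤ ((1/2:ℝ)^j) ^ (-(Q/p)) := Real.rpow_nonneg hbj.le _
            nlinarith [mul_nonneg hK0.le hN0]
      _ = K0 * M^(Q/p) * r^(-(Q/p)) * N := by rw [h2]; ring
    -- middle estimate
    obtain ⟨w, hw1, hw2, hw3⟩ := key x ((1/2:ℝ)^j) hbj
      (fun z => |u (pk x j) - u z| ≤ dist (pk x j) z ^ s * (g (pk x j) + g z) ∧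
        |u (pk y j) - u z| ≤ dist (pk y j) z ^ s * (g (pk y j) + g z))
      ((hmem x j).and (hmem y j))
    have hd1 : dist (pk x j) w ≤ 3 * r := by
      calc dist (pk x j) w ≤ dist (pk x j) x + dist w x := dist_triangle_right _ _ _
      _ ≤ (1/2:ℝ)^j + (1/2:ℝ)^j := add_le_add (hd x j).le hw1.le
      _ ≤ 3 * r := by linarith
    have hd2 : dist (pk y j) w ≤ 3 * r := by
      calc dist (pk y j) w ≤ dist (pk y j) y + dist y w := dist_triangle _ _ _
      _ ≤ (1/2:ℝ)^j + (dist y x + dist x w) := add_le_add (hd y j).le (dist_triangle _ _ _)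
      _ = (1/2:ℝ)^j + (r + dist w x) := by rw [dist_comm y x, dist_comm x w, ← hr_def]
      _ ≤ (1/2:ℝ)^j + (r + (1/2:ℝ)^j) := by linarith [hw1.le]
      _ ≤ 3 * r := by linarith
    set Λ : ℝ := K0 * M^(Q/p) * r^(-(Q/p)) * N with hΛ_def
    have hΛ0 : 0 ≤ Λ := by
      have : 0 ≤ r^(-(Q/p)) := Real.rpow_nonneg hr.le _
      simp only [hΛ_def]
      positivity
    have hgs : g (pk x j) ≤ Λ := (hgp x j).trans hlamj
    have hgs' : g (pk y j) ≤ Λ := (hgp y j).trans hlamj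
    have hgw : g w ≤ Λ := hw2.trans hlamj
    have h3r : (0:ℝ) ≤ (3*r)^s := Real.rpow_nonneg (by linarith) _
    have hmid : dist (u (pk x j)) (u (pk y j)) ≤ Cm * N * r ^ t := by
      calc dist (u (pk x j)) (u (pk y j)) = |u (pk x j) - u (pk y j)| := Real.dist_eq _ _
      _ ≤ |u (pk x j) - u w| + |u w - u (pk y j)| := abs_sub_le _ _ _
      _ = |u (pk x j) - u w| + |u (pk y j) - u w| := by rw [abs_sub_comm (u w)]
      _ ≤ dist (pk x j) w ^ s * (g (pk x j) + g w)
          + dist (pk y j) w ^ s * (g (pk y j) + g w) := add_le_add hw3.1 hw3.2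
      _ ≤ (3*r) ^ s * (Λ + Λ) + (3*r) ^ s * (Λ + Λ) := by
          refine add_le_add (mul_le_mul (Real.rpow_le_rpow dist_nonneg hd1 hs.le)
            (by linarith) (add_nonneg (hg0 _) (hg0 _)) h3r)
            (mul_le_mul (Real.rpow_le_rpow dist_nonneg hd2 hs.le)
            (by linarith) (add_nonneg (hg0 _) (hg0 _)) h3r)
      _ = Cm * N * r ^ t := by
          rw [Real.mul_rpow (by norm_num) hr.le, hΛ_def, hCm_def,
            show (3:ℝ)^s * r^s * (K0 * M^(Q/p) * r^(-(Q/p)) * N + K0 * M^(Q/p) * r^(-(Q/p)) * N)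
              + (3:ℝ)^s * r^s * (K0 * M^(Q/p) * r^(-(Q/p)) * N + K0 * M^(Q/p) * r^(-(Q/p)) * N)
              = 4 * (3:ℝ)^s * K0 * M^(Q/p) * N * (r^s * r^(-(Q/p))) from by ring,
            ← Real.rpow_add hr, show s + -(Q/p) = t from by rw [ht_def]; ring]
    have hqjt : q ^ j ≤ r ^ t := by
      rw [← hpow t j]
      exact Real.rpow_le_rpow hbj.le hj1.le ht.le
    have htail1 : dist (v x) (u (pk x j)) ≤ (Cs / (1-q)) * N * r ^ t := by
      rw [dist_comm]
      refine (htail x j).trans ?_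
      rw [show (Cs/(1-q)) * N * r^t = (Cs * N * r^t)/(1-q) from by ring]
      exact div_le_div_of_nonneg_right' h1q
        (mul_le_mul_of_nonneg_left hqjt (mul_nonneg hCs.le hN0))
    have htail2 : dist (u (pk y j)) (v y) ≤ (Cs / (1-q)) * N * r ^ t := by
      refine (htail y j).trans ?_
      rw [show (Cs/(1-q)) * N * r^t = (Cs * N * r^t)/(1-q) from by ring]
      exact div_le_div_of_nonneg_right' h1q
        (mul_le_mul_of_nonneg_left hqjt (mul_nonneg hCs.le hN0))
    have hfinal : |v x - v y| ≤ (2 * Cs / (1-q) + Cm) * N * r ^ t := by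
      calc |v x - v y| = dist (v x) (v y) := (Real.dist_eq _ _).symm
      _ ≤ dist (v x) (u (pk x j)) + dist (u (pk x j)) (u (pk y j))
          + dist (u (pk y j)) (v y) := dist_triangle4 _ _ _ _
      _ ≤ (Cs / (1-q)) * N * r ^ t + Cm * N * r ^ t + (Cs / (1-q)) * N * r ^ t :=
          add_le_add (add_le_add htail1 hmid) htail2
      _ = (2 * Cs / (1-q) + Cm) * N * r ^ t := by ring
    refine hfinal.trans ?_
    have hrt : 0 ≤ r ^ t := Real.rpow_nonneg hr.le _
    calc (2 * Cs / (1-q) + Cm) * N * r ^ t = (2 * Cs / (1-q) + Cm) * (r ^ t * N) := by ring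
    _ ≤ (2 * Cs / (1-q) + Cm + 1) * (r ^ t * N) :=
        mul_le_mul_of_nonneg_right (by linarith) (mul_nonneg hrt hN0)
    _ = (2 * Cs / (1-q) + Cm + 1) * r ^ t * N := by ring
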